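/- arXiv:2210.11402 — 6 statements merged into one kernel-verified Lean document; each statement's English description precedes it below -/
import Mathlib

section
/- Equivalence of never-Δ-best-response and Δ-dominance: In a finite game, suppose action a ∈ A_i is never a Δ-best response, i.e., for every correlated belief Π_{-i} ∈ Δ(∏_{j≠i} A_j) there exists a mixed strategy x ∈ Δ(A_i) with u_i(a, Π_{-i}) ≤ u_i(x, Π_{-i}) − Δ. Then a is Δ-dominated: there exists a single mixed strategy x ∈ Δ(A_i) such that for all beliefs Π_{-i}, u_i(a, Π_{-i}) ≤ u_i(x, Π_{-i}) − Δ. (The proof uses von Neumann's minimax theorem applied to the two-player zero-sum game with payoff u_i(a,·) − u_i(·,·).) -/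
/-- The set of mixed strategies (probability vectors) over a finite set. -/
def mixed (α : Type*) [Fintype α] : Set (α → ℝ) :=
  {x | (∀ a, 0 ≤ x a) ∧ ∑ a, x a = 1}

lemma mixed_eq_stdSimplex (α : Type*) [Fintype α] : mixed α = stdSimplex ℝ α := rfl

/-- Key algebraic identity swapping the two sums. -/
lemma swap_ident {α β : Type*} [Fintype α] [Fintype β]
    (u : α → β → ℝ) (a0 : α) (x : α → ℝ) (π : β → ℝ) (hx : ∑ a, x a = 1) :
    ∑ b, π b * (∑ a, x a * (u a b - u a0 b))
      = (∑ a, x a * ∑ b, π b * u a b) - ∑ b, π b * u a0 b := by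
  have : ∑ b, π b * (∑ a, x a * (u a b - u a0 b))
      = ∑ b, ∑ a, (x a * (π b * u a b) - (π b * u a0 b) * x a) := by
    refine Finset.sum_congr rfl fun b _ => ?_
    rw [Finset.mul_sum]
    refine Finset.sum_congr rfl fun a _ => by ring
  rw [this, Finset.sum_comm]
  rw [Finset.sum_congr rfl fun a _ => Finset.sum_sub_distrib _ _]
  rw [Finset.sum_sub_distrib]
  congr 1
  · exact Finset.sum_congr rfl fun a _ => (Finset.mul_sum _ _ _).symm
  · rw [Finset.sum_comm]
    rw [Finset.sum_congr rfl fun b _ => (Finset.mul_sum _ _ _).symm]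
    rw [Finset.sum_congr rfl fun b _ => by rw [hx, mul_one]]

/-- Equivalence of never-`Δ`-best-response and `Δ`-dominance: if for every
correlated belief `π` over the opponents' joint action set `β` there is a mixed
strategy beating action `a0` by at least `Δ`, then there is a single mixed
strategy `x` beating `a0` by at least `Δ` against every belief. -/
theorem never_best_response_iff_dominated
    {α β : Type*} [Fintype α] [Fintype β] [Nonempty α] [Nonempty β]
    (u : α → β → ℝ) (Δ : ℝ) (a0 : α)
    (h : ∀ π ∈ mixed β, ∃ x ∈ mixed α,
      (∑ b, π b * u a0 b) ≤ (∑ a, x a * ∑ b, π b * u a b) - Δ) :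
    ∃ x ∈ mixed α, ∀ π ∈ mixed β,
      (∑ b, π b * u a0 b) ≤ (∑ a, x a * ∑ b, π b * u a b) - Δ := by
  classical
  by_contra hcon
  -- the linear map sending a mixed strategy to its advantage vector
  set L : (α → ℝ) →ₗ[ℝ] (β → ℝ) :=
    { toFun := fun x b => ∑ a, x a * (u a b - u a0 b)
      map_add' := fun x y => by
        funext b; simp [add_mul, Finset.sum_add_distrib]
      map_smul' := fun c x => by
        funext b; simp [Finset.mul_sum, mul_assoc] } with hL
  set V : Set (β → ℝ) := L '' mixed α with hV
  set K : Set (β → ℝ) := {w | ∀ b, Δ ≤ w b} with hK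
  have hdisj : Disjoint V K := by
    rw [Set.disjoint_left]
    rintro w ⟨x, hx, rfl⟩ hwK
    refine hcon ⟨x, hx, fun π hπ => ?_⟩
    have key : Δ ≤ ∑ b, π b * (L x b) := by
      calc Δ = ∑ b, π b * Δ := by
              rw [← Finset.sum_mul, hπ.2, one_mul]
        _ ≤ ∑ b, π b * (L x b) :=
              Finset.sum_le_sum fun b _ => mul_le_mul_of_nonneg_left (hwK b) (hπ.1 b)
    have := swap_ident u a0 x π hx.2
    simp only [hL, LinearMap.coe_mk, AddHom.coe_mk] at key
    linarith [key.trans_eq this]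
  have hVconv : Convex ℝ V := ((convex_stdSimplex ℝ α).linear_image L)
  have hVcomp : IsCompact V := ((isCompact_stdSimplex ℝ α).image
    (LinearMap.continuous_of_finiteDimensional L))
  have hKconv : Convex ℝ K := by
    have : K = ⋂ b, {w : β → ℝ | Δ ≤ w b} := by
      ext w; simp [hK]
    rw [this]
    exact convex_iInter fun b =>
      convex_halfSpace_ge ⟨fun x y => rfl, fun c x => rfl⟩ Δ
  have hKclosed : IsClosed K := by
    have : K = ⋂ b, {w : β → ℝ | Δ ≤ w b} := by
      ext w; simp [hK]
    rw [this]
    exact isClosed_iInter fun b => isClosed_le continuous_const (continuous_apply b)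
  obtain ⟨f, c, d, hfV, hcd, hfK⟩ :=
    geometric_hahn_banach_compact_closed hVconv hVcomp hKconv hKclosed hdisj
  set π : β → ℝ := fun b => f (Pi.single b 1) with hπdef
  have hf_eval : ∀ w : β → ℝ, f w = ∑ b, w b * π b := by
    intro w
    have hw : w = ∑ b, (w b) • (Pi.single b (1 : ℝ) : β → ℝ) := by
      conv_lhs => rw [← Finset.univ_sum_single w]
      refine Finset.sum_congr rfl fun b _ => ?_
      rw [← Pi.single_smul, smul_eq_mul, mul_one]
    conv_lhs => rw [hw]
    rw [map_sum]
    exact Finset.sum_congr rfl fun b _ => by rw [map_smul, smul_eq_mul]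
  set s : ℝ := ∑ b, π b with hs
  -- Δ•1 ∈ K
  have hΔ1 : (fun _ : β => Δ) ∈ K := fun b => le_refl Δ
  have hfΔ1 : f (fun _ : β => Δ) = Δ * s := by
    rw [hf_eval, hs, Finset.mul_sum]
  have hvΔs : d < Δ * s := hfΔ1 ▸ hfK _ hΔ1
  -- π is nonnegative
  have hπnn : ∀ b, 0 ≤ π b := by
    intro b
    by_contra hneg
    push_neg at hneg
    set t : ℝ := max 0 ((d - Δ * s - 1) / π b) with ht
    have ht0 : 0 ≤ t := le_max_left _ _
    have hwK : ((fun _ : β => Δ) + t • (Pi.single b (1:ℝ) : β → ℝ)) ∈ K := by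
      intro b'
      simp only [Pi.add_apply, Pi.smul_apply, smul_eq_mul]
      rcases eq_or_ne b' b with rfl | hne
      · simp; nlinarith
      · simp [Pi.single_eq_of_ne hne]
    have hfw : f ((fun _ : β => Δ) + t • (Pi.single b (1:ℝ) : β → ℝ)) = Δ * s + t * π b := by
      rw [map_add, map_smul, hfΔ1, smul_eq_mul]
    have htb : t * π b ≤ d - Δ * s - 1 := by
      have : (d - Δ * s - 1) / π b ≤ t := le_max_right _ _
      calc t * π b ≤ ((d - Δ * s - 1) / π b) * π b :=
            mul_le_mul_of_nonpos_right this hneg.le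
        _ = d - Δ * s - 1 := div_mul_cancel₀ _ hneg.ne
    have := hfK _ hwK
    rw [hfw] at this
    linarith
  -- the uniform strategy gives a point of V
  have huniform : (fun _ : α => (1 : ℝ) / Fintype.card α) ∈ mixed α := by
    constructor
    · intro a
      positivity
    · rw [Finset.sum_const, nsmul_eq_mul, Finset.card_univ]
      field_simp
  have hVnonempty : (L (fun _ : α => (1 : ℝ) / Fintype.card α)) ∈ V :=
    ⟨_, huniform, rfl⟩
  -- s > 0
  have hspos : 0 < s := by
    rcases lt_or_eq_of_le (Finset.sum_nonneg fun b _ => hπnn b : (0:ℝ) ≤ s) with h' | h'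
    · exact h'
    · exfalso
      have hπ0 : ∀ b, π b = 0 := by
        intro b
        have := Finset.sum_eq_zero_iff_of_nonneg (fun b _ => hπnn b) |>.mp h'.symm
        exact this b (Finset.mem_univ b)
      have h1 : f (L (fun _ : α => (1 : ℝ) / Fintype.card α)) < c := hfV _ hVnonempty
      rw [hf_eval] at h1
      rw [Finset.sum_congr rfl fun b _ => by rw [hπ0 b, mul_zero]] at h1
      rw [Finset.sum_const, smul_zero] at h1
      have hs0 : Δ * s = 0 := by rw [hs, ← h', mul_zero]
      linarith
  -- normalized π is a mixed strategy over β
  have hπ' : (fun b => π b / s) ∈ mixed β := by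
    constructor
    · intro b; exact div_nonneg (hπnn b) hspos.le
    · rw [← Finset.sum_div, ← hs, div_self hspos.ne']
  obtain ⟨x, hx, hxineq⟩ := h _ hπ'
  have hxV : L x ∈ V := ⟨x, hx, rfl⟩
  have h2 : f (L x) < c := hfV _ hxV
  -- and from hxineq, f (L x) ≥ Δ * s
  have h3 : Δ * s ≤ f (L x) := by
    have key := swap_ident u a0 x (fun b => π b / s) hx.2
    have key2 : Δ ≤ ∑ b, (π b / s) * (∑ a, x a * (u a b - u a0 b)) := by
      rw [key]; linarith
    rw [hf_eval]
    have : ∑ b, (π b / s) * (∑ a, x a * (u a b - u a0 b))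
        = (∑ b, (L x) b * π b) / s := by
      rw [Finset.sum_div]
      refine Finset.sum_congr rfl fun b _ => ?_
      simp only [hL, LinearMap.coe_mk, AddHom.coe_mk]
      ring
    rw [this] at key2
    calc Δ * s ≤ ((∑ b, (L x) b * π b) / s) * s := by
          exact mul_le_mul_of_nonneg_right key2 hspos.le
      _ = ∑ b, (L x) b * π b := div_mul_cancel₀ _ hspos.ne'
  linarith
end

section
/- Support of approximate Nash on iteratively dominated actions: if x* is an ε-Nash equilibrium with ε < Δ²/(24 N² A), then for every player i and every elimination level l ≤ L, the probability under x*_i of playing an action in E_l is at most 2lε/Δ. -/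
/-- Action `a` of player `i` is `Δ`-dominated by some mixed strategy against all
opposing action profiles avoiding the set `E`. -/
def Dominated {N : ℕ} {A : Fin N → Type*} [∀ i, Fintype (A i)]
    (u : ∀ i : Fin N, (∀ j, A j) → ℝ) (Δ : ℝ) (E : Set ((i : Fin N) × A i))
    (i : Fin N) (a : A i) : Prop :=
  ∃ x ∈ mixed (A i), ∀ p : ∀ j, A j,
    (∀ j, j ≠ i → (⟨j, p j⟩ : (k : Fin N) × A k) ∉ E) →
    u i (Function.update p i a) ≤ (∑ b, x b * u i (Function.update p i b)) - Δ

/-- `Elim u Δ l` is the (cumulative) set `E_l` of actions eliminated by round `l`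
of `Δ`-iterated dominance elimination. -/
def Elim {N : ℕ} {A : Fin N → Type*} [∀ i, Fintype (A i)]
    (u : ∀ i : Fin N, (∀ j, A j) → ℝ) (Δ : ℝ) : ℕ → Set ((i : Fin N) × A i)
  | 0 => ∅
  | (l + 1) => Elim u Δ l ∪ {ia | Dominated u Δ (Elim u Δ l) ia.1 ia.2}

/-- Expected utility of `f` under a product of mixed strategies `x`. -/
noncomputable def EU {N : ℕ} {A : Fin N → Type*} [∀ i, Fintype (A i)]
    (f : (∀ j, A j) → ℝ) (x : ∀ j, A j → ℝ) : ℝ :=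
  ∑ p : ∀ j, A j, (∏ j, x j (p j)) * f p

open Finset Function

section aux
variable {N : ℕ} {A : Fin N → Type*} [∀ i, Fintype (A i)]

lemma elim_subset_succ (u : ∀ i : Fin N, (∀ j, A j) → ℝ) (Δ : ℝ) (l : ℕ) :
    Elim u Δ l ⊆ Elim u Δ (l + 1) := by
  show Elim u Δ l ⊆ Elim u Δ l ∪ _
  exact Set.subset_union_left

lemma dominated_mono (u : ∀ i : Fin N, (∀ j, A j) → ℝ) (Δ : ℝ)
    {E E' : Set ((i : Fin N) × A i)} (h : E ⊆ E') {i : Fin N} {a : A i}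
    (hd : Dominated u Δ E i a) : Dominated u Δ E' i a := by
  obtain ⟨y, hy, hdom⟩ := hd
  exact ⟨y, hy, fun p hp => hdom p fun j hj hm => hp j hj (h hm)⟩

lemma mem_elim_dominated (u : ∀ i : Fin N, (∀ j, A j) → ℝ) (Δ : ℝ) :
    ∀ {l : ℕ} {i : Fin N} {a : A i},
    (⟨i, a⟩ : (k : Fin N) × A k) ∈ Elim u Δ (l + 1) →
    Dominated u Δ (Elim u Δ l) i a := by
  intro l
  induction l with
  | zero =>
    intro i a h
    rcases h with h | h
    · exact absurd h (by simp [Elim])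
    · exact h
  | succ l ih =>
    intro i a h
    rcases h with h | h
    · exact dominated_mono u Δ (elim_subset_succ u Δ l) (ih h)
    · exact h

/-- The key involution swap. -/
lemma sum_sum_update (i : Fin N) (F : (∀ j, A j) → A i → ℝ) :
    ∑ p : ∀ j, A j, ∑ a : A i, F p a
      = ∑ p : ∀ j, A j, ∑ a : A i, F (Function.update p i a) (p i) := by
  rw [← Fintype.sum_prod_type (f := fun z : (∀ j, A j) × A i => F z.1 z.2),
      ← Fintype.sum_prod_type (f := fun z : (∀ j, A j) × A i => F (Function.update z.1 i z.2) (z.1 i))]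
  refine Fintype.sum_bijective (fun z : (∀ j, A j) × A i => (Function.update z.1 i z.2, z.1 i))
    (Function.Involutive.bijective ?_) _ _ ?_
  · intro z
    ext <;> simp [Function.update_idem]
  · intro z
    simp [Function.update_idem]

lemma total_mass (x : ∀ j, A j → ℝ) (h1 : ∀ j, ∑ a, x j a = 1) :
    ∑ p : ∀ j, A j, ∏ j, x j (p j) = 1 := by
  rw [← Fintype.prod_sum]
  simp [h1]

lemma prod_update_eq (x : ∀ j, A j → ℝ) (i : Fin N) (p : ∀ j, A j) (a : A i) :
    (∏ j, x j (Function.update p i a j)) = x i a * ∏ j ∈ univ.erase i, x j (p j) := by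
  rw [← Finset.mul_prod_erase univ _ (mem_univ i)]
  congr 1
  · rw [Function.update_self]
  · exact Finset.prod_congr rfl fun j hj => by rw [Function.update_of_ne (mem_erase.mp hj).1]

lemma prod_split (x : ∀ j, A j → ℝ) (i : Fin N) (p : ∀ j, A j) :
    (∏ j, x j (p j)) = x i (p i) * ∏ j ∈ univ.erase i, x j (p j) :=
  (Finset.mul_prod_erase univ _ (mem_univ i)).symm

lemma marginal (x : ∀ j, A j → ℝ) (h1 : ∀ j, ∑ a, x j a = 1) (i : Fin N) (h : A i → ℝ) :
    ∑ p : ∀ j, A j, (∏ j, x j (p j)) * h (p i) = ∑ a, x i a * h a := by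
  have step : ∑ a, x i a * h a
      = ∑ p : ∀ j, A j, ∑ a : A i, (∏ j, x j (p j)) * (x i a * h a) := by
    rw [Finset.sum_comm]
    rw [Finset.sum_congr rfl (fun a _ => (Finset.sum_mul _ _ _).symm)]
    · simp [total_mass x h1]
  rw [step, sum_sum_update i (fun p a => (∏ j, x j (p j)) * (x i a * h a))]
  refine Finset.sum_congr rfl fun p _ => ?_
  have : ∀ a : A i, (∏ j, x j (Function.update p i a j)) * (x i (p i) * h (p i))
      = x i a * ((∏ j ∈ univ.erase i, x j (p j)) * (x i (p i) * h (p i))) := by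
    intro a; rw [prod_update_eq]; ring
  rw [Finset.sum_congr rfl fun a _ => this a, ← Finset.sum_mul, h1 i, one_mul,
    prod_split x i p]
  ring

lemma EU_update (x : ∀ j, A j → ℝ) (h1 : ∀ j, ∑ a, x j a = 1)
    (i : Fin N) (f : (∀ j, A j) → ℝ) (z : A i → ℝ) :
    EU f (Function.update x i z) =
      ∑ p : ∀ j, A j, (∏ j, x j (p j)) * (∑ b, z b * f (Function.update p i b)) := by
  have lhs : EU f (Function.update x i z)
      = ∑ p : ∀ j, A j, z (p i) * ((∏ j ∈ univ.erase i, x j (p j)) * f p) := by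
    unfold EU
    refine Finset.sum_congr rfl fun p _ => ?_
    rw [← Finset.mul_prod_erase univ _ (mem_univ i), Function.update_self]
    rw [Finset.prod_congr rfl (fun j hj =>
      show Function.update x i z j (p j) = x j (p j) by
        rw [Function.update_of_ne (mem_erase.mp hj).1])]
    ring
  have rhs : ∑ p : ∀ j, A j, (∏ j, x j (p j)) * (∑ b, z b * f (Function.update p i b))
      = ∑ p : ∀ j, A j, ∑ b : A i,
          (∏ j, x j (p j)) * (z b * f (Function.update p i b)) := by
    exact Finset.sum_congr rfl fun p _ => Finset.mul_sum _ _ _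
  rw [lhs, rhs, sum_sum_update i (fun p b => (∏ j, x j (p j)) * (z b * f (Function.update p i b)))]
  refine Finset.sum_congr rfl fun p _ => ?_
  have key : ∀ b : A i, (∏ j, x j (Function.update p i b j)) *
      (z (p i) * f (Function.update (Function.update p i b) i (p i)))
      = x i b * ((∏ j ∈ univ.erase i, x j (p j)) * (z (p i) * f p)) := by
    intro b
    rw [prod_update_eq, Function.update_idem, Function.update_eq_self]
    ring
  rw [Finset.sum_congr rfl fun b _ => key b, ← Finset.sum_mul, h1 i, one_mul]
  ring

end aux
section aux2
variable {N : ℕ} {A : Fin N → Type*} [∀ i, Fintype (A i)]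

lemma elim_ncard_ge (u : ∀ i : Fin N, (∀ j, A j) → ℝ) (Δ : ℝ) :
    ∀ m : ℕ, m ≤ sInf {l' : ℕ | Elim u Δ (l' + 1) = Elim u Δ l'} →
    m ≤ (Elim u Δ m).ncard := by
  intro m
  induction m with
  | zero => intro _; exact Nat.zero_le _
  | succ m ih =>
    intro hm
    have hmem : m ∉ {l' : ℕ | Elim u Δ (l' + 1) = Elim u Δ l'} :=
      Nat.notMem_of_lt_sInf (lt_of_lt_of_le (Nat.lt_succ_self m) hm)
    have hss : Elim u Δ m ⊂ Elim u Δ (m + 1) :=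
      HasSubset.Subset.ssubset_of_ne (elim_subset_succ u Δ m) (fun h => hmem h.symm)
    have := Set.ncard_lt_ncard hss (Set.toFinite _)
    have h2 := ih (Nat.le_of_succ_le hm)
    omega

lemma elim_card_le (u : ∀ i : Fin N, (∀ j, A j) → ℝ) (Δ : ℝ) (Acard : ℕ)
    (hcard : ∀ i, Fintype.card (A i) ≤ Acard) (m : ℕ) :
    (Elim u Δ m).ncard ≤ N * Acard := by
  have h1 : (Elim u Δ m).ncard ≤ Fintype.card ((i : Fin N) × A i) := by
    rw [← Nat.card_eq_fintype_card, ← Set.ncard_univ]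
    exact Set.ncard_le_ncard (Set.subset_univ _) (Set.toFinite _)
  have h2 : Fintype.card ((i : Fin N) × A i) ≤ N * Acard := by
    rw [Fintype.card_sigma]
    calc ∑ i, Fintype.card (A i) ≤ ∑ _i : Fin N, Acard := Finset.sum_le_sum fun i _ => hcard i
      _ = N * Acard := by simp [mul_comm]
  omega

end aux2

set_option maxHeartbeats 1000000 in
/-- Support of an `ε`-Nash equilibrium on iteratively dominated actions: if
`ε < Δ²/(24 N² A)`, then for every player `i` and every elimination level
`l ≤ L` (the minimum elimination length), the probability that `x*_i` plays an
action in `E_l` is at most `2lε/Δ`. -/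
theorem nash_support_iteratively_dominated
    {N : ℕ} {A : Fin N → Type*} [∀ i, Fintype (A i)]
    (u : ∀ i : Fin N, (∀ j, A j) → ℝ) (hu : ∀ i p, 0 ≤ u i p ∧ u i p ≤ 1)
    (Δ ε : ℝ) (Acard : ℕ) (hcard : ∀ i, Fintype.card (A i) ≤ Acard)
    (hΔ : 0 < Δ) (hε : 0 ≤ ε) (hsmall : ε < Δ ^ 2 / (24 * N ^ 2 * Acard))
    (x : ∀ i, A i → ℝ) (hx : ∀ i, x i ∈ mixed (A i))
    (hNash : ∀ i : Fin N, ∀ x' ∈ mixed (A i),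
      EU (u i) (Function.update x i x') ≤ EU (u i) x + ε) :
    ∀ i : Fin N, ∀ l : ℕ,
      l ≤ sInf {l' : ℕ | Elim u Δ (l' + 1) = Elim u Δ l'} →
      (∑ a : A i,
        Set.indicator {a : A i | (⟨i, a⟩ : (k : Fin N) × A k) ∈ Elim u Δ l} (x i) a)
        ≤ 2 * l * ε / Δ := by
  classical
  suffices key : ∀ l : ℕ, l ≤ sInf {l' : ℕ | Elim u Δ (l' + 1) = Elim u Δ l'} →
      ∀ i : Fin N,
      (∑ a : A i,
        Set.indicator {a : A i | (⟨i, a⟩ : (k : Fin N) × A k) ∈ Elim u Δ l} (x i) a)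
        ≤ 2 * l * ε / Δ by
    intro i l hl; exact key l hl i
  intro l
  induction l with
  | zero =>
    intro _ i
    simp [Elim, Set.indicator_apply]
  | succ l IH =>
    intro hl i
    have IH' := IH (Nat.le_of_succ_le hl)
    -- convert indicator sums to if-sums
    have ind_eq : ∀ (j : Fin N) (m : ℕ),
        (∑ a : A j, Set.indicator {a : A j | (⟨j, a⟩ : (k : Fin N) × A k) ∈ Elim u Δ m} (x j) a)
        = ∑ a : A j, (if (⟨j, a⟩ : (k : Fin N) × A k) ∈ Elim u Δ m then x j a else 0) := by
      intro j m
      exact Finset.sum_congr rfl fun a _ => by rw [Set.indicator_apply]; rfl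
    have mass_le : ∀ j : Fin N,
        (∑ b : A j, (if (⟨j, b⟩ : (k : Fin N) × A k) ∈ Elim u Δ l then x j b else 0))
          ≤ 2 * l * ε / Δ := fun j => (ind_eq j l) ▸ IH' j
    rw [ind_eq i (l + 1)]
    -- basic positivity facts
    have hxnn := (hx i).1
    have hRHSl : (0:ℝ) ≤ 2 * l * ε / Δ := by positivity
    have hmono : 2 * (l:ℝ) * ε / Δ ≤ 2 * ((l:ℕ)+1 : ℕ) * ε / Δ := by
      push_cast
      gcongr
      linarith [Nat.cast_nonneg (α := ℝ) l]
    have hP_le_one : (∑ a : A i, (if (⟨i, a⟩ : (k : Fin N) × A k) ∈ Elim u Δ (l+1) then x i a else 0)) ≤ 1 := by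
      calc (∑ a : A i, (if (⟨i, a⟩ : (k : Fin N) × A k) ∈ Elim u Δ (l+1) then x i a else 0))
          ≤ ∑ a : A i, x i a := Finset.sum_le_sum fun a _ => by split <;> simp [hxnn a]
        _ = 1 := (hx i).2
    by_cases hfull : ∃ j : Fin N, ∀ b : A j, (⟨j, b⟩ : (k : Fin N) × A k) ∈ Elim u Δ l
    · -- some player's actions are all eliminated at level l : then 1 ≤ 2lε/Δ
      obtain ⟨j, hj⟩ := hfull
      have h1 : (1:ℝ) ≤ 2 * l * ε / Δ := by
        have hm := mass_le j
        rw [Finset.sum_congr rfl (fun b _ => if_pos (hj b)), (hx j).2] at hm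
        exact hm
      calc (∑ a : A i, (if (⟨i, a⟩ : (k : Fin N) × A k) ∈ Elim u Δ (l+1) then x i a else 0))
          ≤ 1 := hP_le_one
        _ ≤ 2 * l * ε / Δ := h1
        _ ≤ _ := hmono
    · push_neg at hfull
      by_cases hS : ∀ a : A i, (⟨i, a⟩ : (k : Fin N) × A k) ∉ Elim u Δ (l + 1)
      · rw [Finset.sum_congr rfl (fun a _ => if_neg (hS a)), Finset.sum_const, smul_zero]
        positivity
      · push_neg at hS
        obtain ⟨a0, ha0⟩ := hS
        choose p0 hp0 using hfull
        -- basic sizes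
        have hN : 0 < N := i.pos
        have hAi : 0 < Fintype.card (A i) := Fintype.card_pos_iff.mpr ⟨a0⟩
        have hAcard : 0 < Acard := lt_of_lt_of_le hAi (hcard i)
        -- Δ ≤ 1
        have hΔ1 : Δ ≤ 1 := by
          obtain ⟨y0, hy0m, hy0⟩ := mem_elim_dominated u Δ ha0
          have h := hy0 p0 (fun j _ => hp0 j)
          have hle1 : ∑ b, y0 b * u i (Function.update p0 i b) ≤ 1 := by
            calc ∑ b, y0 b * u i (Function.update p0 i b)
                ≤ ∑ b, y0 b * 1 :=
                  Finset.sum_le_sum fun b _ =>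
                    mul_le_mul_of_nonneg_left (hu i _).2 (hy0m.1 b)
              _ = 1 := by rw [Finset.sum_congr rfl fun b _ => mul_one (y0 b)]; exact hy0m.2
          linarith [(hu i (Function.update p0 i a0)).1]
        -- bound on l from elimination length
        have hlN : (l : ℝ) + 1 ≤ (N : ℝ) * Acard := by
          have h1 := elim_ncard_ge u Δ (l+1) hl
          have h2 := elim_card_le u Δ Acard hcard (l+1)
          have : l + 1 ≤ N * Acard := le_trans h1 h2
          exact_mod_cast this
        -- the weight function
        set μ : (∀ j, A j) → ℝ := fun p => ∏ j, x j (p j) with hμdef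
        have hμnn : ∀ p, 0 ≤ μ p := fun p => Finset.prod_nonneg fun j _ => (hx j).1 _
        have hμtot : ∑ p : ∀ j, A j, μ p = 1 := total_mass x (fun j => (hx j).2)
        -- good profiles
        set Good : Finset (∀ j, A j) :=
          Finset.univ.filter
            (fun p => ∀ j, j ≠ i → (⟨j, p j⟩ : (k : Fin N) × A k) ∉ Elim u Δ l) with hGood
        set q : ℝ := ∑ p ∈ Goodᶜ, μ p with hq
        have hqnn : 0 ≤ q := Finset.sum_nonneg fun p _ => hμnn p
        have hGsum : ∑ p ∈ Good, μ p = 1 - q := by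
          have := Finset.sum_add_sum_compl Good μ
          rw [hμtot] at this
          linarith
        -- union bound : q ≤ Δ / 12
        have hq12 : q ≤ Δ / 12 := by
          have step1 : q ≤ ∑ p : ∀ j, A j, μ p *
              (∑ j ∈ Finset.univ.erase i,
                (if (⟨j, p j⟩ : (k : Fin N) × A k) ∈ Elim u Δ l then (1:ℝ) else 0)) := by
            have h1 : ∀ p ∈ Goodᶜ, μ p ≤ μ p *
                (∑ j ∈ Finset.univ.erase i,
                  (if (⟨j, p j⟩ : (k : Fin N) × A k) ∈ Elim u Δ l then (1:ℝ) else 0)) := by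
              intro p hp
              rw [Finset.mem_compl, hGood, Finset.mem_filter] at hp
              push_neg at hp
              obtain ⟨j, hji, hjE⟩ := hp (Finset.mem_univ p)
              have hB : (1:ℝ) ≤ ∑ j ∈ Finset.univ.erase i,
                  (if (⟨j, p j⟩ : (k : Fin N) × A k) ∈ Elim u Δ l then (1:ℝ) else 0) := by
                have := Finset.single_le_sum (f := fun j : Fin N =>
                    (if (⟨j, p j⟩ : (k : Fin N) × A k) ∈ Elim u Δ l then (1:ℝ) else 0))
                  (fun k _ => by positivity) (Finset.mem_erase.mpr ⟨hji, Finset.mem_univ j⟩)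
                simpa [hjE] using this
              nlinarith [hμnn p]
            calc q ≤ ∑ p ∈ Goodᶜ, μ p *
                (∑ j ∈ Finset.univ.erase i,
                  (if (⟨j, p j⟩ : (k : Fin N) × A k) ∈ Elim u Δ l then (1:ℝ) else 0)) :=
                Finset.sum_le_sum h1
              _ ≤ _ := Finset.sum_le_sum_of_subset_of_nonneg (Finset.subset_univ _)
                  (fun p _ _ => by
                    have : (0:ℝ) ≤ ∑ j ∈ Finset.univ.erase i,
                        (if (⟨j, p j⟩ : (k : Fin N) × A k) ∈ Elim u Δ l then (1:ℝ) else 0) :=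
                      Finset.sum_nonneg fun k _ => by positivity
                    exact mul_nonneg (hμnn p) this)
          have step2 : ∑ p : ∀ j, A j, μ p *
              (∑ j ∈ Finset.univ.erase i,
                (if (⟨j, p j⟩ : (k : Fin N) × A k) ∈ Elim u Δ l then (1:ℝ) else 0))
              ≤ (N : ℝ) * (2 * l * ε / Δ) := by
            rw [Finset.sum_congr rfl (fun p _ => Finset.mul_sum _ _ _), Finset.sum_comm]
            have hterm : ∀ j ∈ Finset.univ.erase i,
                (∑ p : ∀ j', A j', μ p *
                  (if (⟨j, p j⟩ : (k : Fin N) × A k) ∈ Elim u Δ l then (1:ℝ) else 0))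
                ≤ 2 * l * ε / Δ := by
              intro j _
              have hm := marginal x (fun j => (hx j).2) j
                (fun b => if (⟨j, b⟩ : (k : Fin N) × A k) ∈ Elim u Δ l then (1:ℝ) else 0)
              rw [hm]
              calc ∑ b : A j, x j b * (if (⟨j, b⟩ : (k : Fin N) × A k) ∈ Elim u Δ l then (1:ℝ) else 0)
                  = ∑ b : A j, (if (⟨j, b⟩ : (k : Fin N) × A k) ∈ Elim u Δ l then x j b else 0) :=
                    Finset.sum_congr rfl fun b _ => by split <;> ring
                _ ≤ 2 * l * ε / Δ := mass_le j
            calc ∑ j ∈ Finset.univ.erase i, ∑ p : ∀ j', A j', μ p *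
                  (if (⟨j, p j⟩ : (k : Fin N) × A k) ∈ Elim u Δ l then (1:ℝ) else 0)
                ≤ ∑ _j ∈ Finset.univ.erase i, (2 * l * ε / Δ) := Finset.sum_le_sum hterm
              _ = (Finset.univ.erase i).card * (2 * l * ε / Δ) := by
                  rw [Finset.sum_const, nsmul_eq_mul]
              _ ≤ (N : ℝ) * (2 * l * ε / Δ) := by
                  apply mul_le_mul_of_nonneg_right _ hRHSl
                  have hc : (Finset.univ.erase i).card ≤ N :=
                    le_trans (Finset.card_le_card (Finset.erase_subset _ _)) (by simp)
                  exact_mod_cast hc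
          have harith : (N : ℝ) * (2 * l * ε / Δ) ≤ Δ / 12 := by
            have hεle : ε * (24 * (N:ℝ)^2 * Acard) ≤ Δ ^ 2 := by
              have hden : (0:ℝ) < 24 * (N:ℝ)^2 * Acard := by positivity
              have := (lt_div_iff₀ hden).mp hsmall
              linarith
            have hN1 : (1:ℝ) ≤ N := by exact_mod_cast hN
            have hA1 : (1:ℝ) ≤ Acard := by exact_mod_cast hAcard
            have hl0 : (0:ℝ) ≤ l := Nat.cast_nonneg l
            have hrw : (N : ℝ) * (2 * l * ε / Δ) = (2 * (N:ℝ) * l * ε) / Δ := by ring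
            rw [hrw, div_le_div_iff₀ hΔ (by norm_num : (0:ℝ) < 12)]
            have hprod : 0 ≤ ε * ((N:ℝ) * Acard - l) * N := by
              apply mul_nonneg (mul_nonneg hε (by linarith)) (by linarith)
            nlinarith [hprod, mul_nonneg hε hl0]
          linarith
        -- construct the deviation strategies
        have hσ : ∀ a : A i, ∃ y : A i → ℝ, y ∈ mixed (A i) ∧
            (∀ p : ∀ j, A j, (∀ j, j ≠ i → (⟨j, p j⟩ : (k : Fin N) × A k) ∉ Elim u Δ l) →
              u i (Function.update p i a) +
                (if (⟨i, a⟩ : (k : Fin N) × A k) ∈ Elim u Δ (l+1) then Δ else 0)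
                ≤ ∑ b, y b * u i (Function.update p i b)) ∧
            ((⟨i, a⟩ : (k : Fin N) × A k) ∉ Elim u Δ (l+1) →
              ∀ p : ∀ j, A j, (∑ b, y b * u i (Function.update p i b)) = u i (Function.update p i a)) := by
          intro a
          by_cases h : (⟨i, a⟩ : (k : Fin N) × A k) ∈ Elim u Δ (l+1)
          · obtain ⟨y, hym, hyd⟩ := mem_elim_dominated u Δ h
            exact ⟨y, hym, fun p hp => by rw [if_pos h]; linarith [hyd p hp],
              fun h' => absurd h h'⟩
          · refine ⟨fun b => if b = a then 1 else 0,
              ⟨fun b => by by_cases hba : b = a <;> simp [hba], by simp⟩, ?_, ?_⟩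
            · intro p hp
              rw [if_neg h]
              have : ∑ b, (if b = a then (1:ℝ) else 0) * u i (Function.update p i b)
                  = u i (Function.update p i a) := by
                simp
              linarith [this.ge]
            · intro _ p
              simp
        choose σ hσm hσd hσe using hσ
        -- the deviation mixed strategy
        set x' : A i → ℝ := fun b => ∑ a, x i a * σ a b with hx'def
        have hx'm : x' ∈ mixed (A i) := by
          constructor
          · intro b
            exact Finset.sum_nonneg fun a _ => mul_nonneg (hxnn a) ((hσm a).1 b)
          · rw [hx'def]
            rw [Finset.sum_comm]
            calc ∑ a : A i, ∑ b : A i, x i a * σ a b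
                = ∑ a : A i, x i a * ∑ b, σ a b :=
                  Finset.sum_congr rfl fun a _ => (Finset.mul_sum _ _ _).symm
              _ = ∑ a : A i, x i a := Finset.sum_congr rfl fun a _ => by rw [(hσm a).2, mul_one]
              _ = 1 := (hx i).2
        have hNa := hNash i x' hx'm
        -- rewrite EU's
        have hEU1 : EU (u i) (Function.update x i x') =
            ∑ p : ∀ j, A j, μ p * (∑ b, x' b * u i (Function.update p i b)) :=
          EU_update x (fun j => (hx j).2) i (u i) x'
        have hEU0 : EU (u i) x =
            ∑ p : ∀ j, A j, μ p * (∑ b, x i b * u i (Function.update p i b)) := by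
          conv_lhs => rw [← Function.update_eq_self i x]
          exact EU_update x (fun j => (hx j).2) i (u i) (x i)
        rw [hEU1, hEU0] at hNa
        -- the gain decomposition
        set g : A i → (∀ j, A j) → ℝ := fun a p =>
          (∑ b, σ a b * u i (Function.update p i b)) - u i (Function.update p i a) with hgdef
        have hgain : ∑ p : ∀ j, A j, μ p * (∑ b, x' b * u i (Function.update p i b))
            - ∑ p : ∀ j, A j, μ p * (∑ b, x i b * u i (Function.update p i b))
            = ∑ a : A i, x i a * (∑ p : ∀ j, A j, μ p * g a p) := by
          rw [← Finset.sum_sub_distrib]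
          have hper : ∀ p : ∀ j, A j,
              μ p * (∑ b, x' b * u i (Function.update p i b))
              - μ p * (∑ b, x i b * u i (Function.update p i b))
              = ∑ a : A i, μ p * (x i a * g a p) := by
            intro p
            have h1 : ∑ b, x' b * u i (Function.update p i b)
                = ∑ a : A i, x i a * (∑ b, σ a b * u i (Function.update p i b)) := by
              simp only [hx'def, Finset.sum_mul, Finset.mul_sum]
              rw [Finset.sum_comm]
              exact Finset.sum_congr rfl fun a _ => Finset.sum_congr rfl fun b _ => by ring
            have h2 : ∑ b, x i b * u i (Function.update p i b)
                = ∑ a : A i, x i a * u i (Function.update p i a) := rfl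
            rw [h1, h2, ← mul_sub, ← Finset.sum_sub_distrib, Finset.mul_sum]
            exact Finset.sum_congr rfl fun a _ => by simp only [hgdef]; ring
          rw [Finset.sum_congr rfl fun p _ => hper p, Finset.sum_comm]
          exact Finset.sum_congr rfl fun a _ => by
            rw [Finset.mul_sum]
            exact Finset.sum_congr rfl fun p _ => by ring
        -- bounds on inner integrals
        have hIa : ∀ a : A i, (⟨i, a⟩ : (k : Fin N) × A k) ∈ Elim u Δ (l+1) →
            Δ / 2 ≤ ∑ p : ∀ j, A j, μ p * g a p := by
          intro a ha
          have hsplit := Finset.sum_add_sum_compl Good (fun p => μ p * g a p)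
          have hgoodb : Δ * (1 - q) ≤ ∑ p ∈ Good, μ p * g a p := by
            have : ∀ p ∈ Good, μ p * Δ ≤ μ p * g a p := by
              intro p hp
              rw [hGood, Finset.mem_filter] at hp
              have hd := hσd a p hp.2
              rw [if_pos ha] at hd
              have : Δ ≤ g a p := by rw [hgdef]; dsimp only; linarith
              exact mul_le_mul_of_nonneg_left this (hμnn p)
            calc Δ * (1 - q) = ∑ p ∈ Good, μ p * Δ := by rw [← Finset.sum_mul, hGsum]; ring
              _ ≤ _ := Finset.sum_le_sum this
          have hbadb : -q ≤ ∑ p ∈ Goodᶜ, μ p * g a p := by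
            have : ∀ p ∈ Goodᶜ, -μ p ≤ μ p * g a p := by
              intro p _
              have hg1 : -1 ≤ g a p := by
                rw [hgdef]
                dsimp only
                have h1 : (0:ℝ) ≤ ∑ b, σ a b * u i (Function.update p i b) :=
                  Finset.sum_nonneg fun b _ =>
                    mul_nonneg ((hσm a).1 b) (hu i _).1
                linarith [(hu i (Function.update p i a)).2]
              nlinarith [hμnn p]
            calc -q = ∑ p ∈ Goodᶜ, -μ p := by rw [hq, ← Finset.sum_neg_distrib]
              _ ≤ _ := Finset.sum_le_sum this
          have : Δ * (1 - q) - q ≤ ∑ p : ∀ j, A j, μ p * g a p := by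
            rw [← hsplit]; linarith
          nlinarith [hq12, hqnn, hΔ1, hΔ]
        have hIa0 : ∀ a : A i, (⟨i, a⟩ : (k : Fin N) × A k) ∉ Elim u Δ (l+1) →
            (∑ p : ∀ j, A j, μ p * g a p) = 0 := by
          intro a ha
          have : ∀ p : ∀ j, A j, g a p = 0 := by
            intro p
            rw [hgdef]
            dsimp only
            rw [hσe a ha p]
            ring
          rw [Finset.sum_congr rfl fun p _ => by rw [this p, mul_zero]]
          exact Finset.sum_const_zero
        -- putting it together
        have hfinal : (∑ a : A i, (if (⟨i, a⟩ : (k : Fin N) × A k) ∈ Elim u Δ (l+1) then x i a else 0))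
            * (Δ / 2) ≤ ε := by
          have h1 : (∑ a : A i, (if (⟨i, a⟩ : (k : Fin N) × A k) ∈ Elim u Δ (l+1) then x i a else 0))
              * (Δ / 2) = ∑ a : A i,
                (if (⟨i, a⟩ : (k : Fin N) × A k) ∈ Elim u Δ (l+1) then x i a else 0) * (Δ / 2) :=
            Finset.sum_mul _ _ _
          have h2 : ∀ a : A i,
              (if (⟨i, a⟩ : (k : Fin N) × A k) ∈ Elim u Δ (l+1) then x i a else 0) * (Δ / 2)
              ≤ x i a * (∑ p : ∀ j, A j, μ p * g a p) := by
            intro a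
            by_cases ha : (⟨i, a⟩ : (k : Fin N) × A k) ∈ Elim u Δ (l+1)
            · rw [if_pos ha]
              exact mul_le_mul_of_nonneg_left (hIa a ha) (hxnn a)
            · rw [if_neg ha, hIa0 a ha, mul_zero, zero_mul]
          calc (∑ a : A i, (if (⟨i, a⟩ : (k : Fin N) × A k) ∈ Elim u Δ (l+1) then x i a else 0)) * (Δ / 2)
              = _ := h1
            _ ≤ ∑ a : A i, x i a * (∑ p : ∀ j, A j, μ p * g a p) :=
                Finset.sum_le_sum fun a _ => h2 a
            _ = ∑ p : ∀ j, A j, μ p * (∑ b, x' b * u i (Function.update p i b))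
                - ∑ p : ∀ j, A j, μ p * (∑ b, x i b * u i (Function.update p i b)) := hgain.symm
            _ ≤ ε := by linarith
        -- finish
        rw [le_div_iff₀ hΔ]
        push_cast
        nlinarith [mul_nonneg hε (Nat.cast_nonneg (α := ℝ) l)]
end

section
/- Subgame equilibrium lifts to full game (CCE case): Suppose the restricted action sets Ã_i ⊆ A_i have the property that every action a_i ∈ A_i \ Ã_i is Δ-dominated (Δ ≥ 0) by some mixed strategy over Ã_i against every opposing profile in ∏_{j≠i} Ã_j, and dominance is iterative so that the best response of any player to any distribution over ∏_{j≠i} Ã_j lies in Ã_i up to zero loss. Then every ε-CCE of the subgame restricted to ∏_i Ã_i is also an ε-CCE of the full game. -/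
/-- Subgame equilibrium lifts to the full game (CCE case): if every action
outside the restricted set `S i` is (weakly) dominated by a mixed strategy over
`S i` against all opposing profiles in the restricted sets, then every `ε`-CCE
of the subgame (a correlated strategy supported on `∏ i, S i`) is an `ε`-CCE of
the full game. -/
theorem subgame_CCE_lifts {N : ℕ} {A : Fin N → Type*} [∀ i, Fintype (A i)]
    (u : ∀ i : Fin N, (∀ j, A j) → ℝ) (S : ∀ i, Finset (A i)) (ε : ℝ)
    (hdom : ∀ i : Fin N, ∀ a : A i, a ∉ S i →
      ∃ x : A i → ℝ, (∀ b, 0 ≤ x b) ∧ (∑ b, x b = 1) ∧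
        (∀ b, x b ≠ 0 → b ∈ S i) ∧
        ∀ p : ∀ j, A j, (∀ j, j ≠ i → p j ∈ S j) →
          u i (Function.update p i a) ≤ ∑ b, x b * u i (Function.update p i b))
    (μ : (∀ j, A j) → ℝ) (hμ0 : ∀ p, 0 ≤ μ p) (hμ1 : ∑ p, μ p = 1)
    (hsupp : ∀ p : ∀ j, A j, μ p ≠ 0 → ∀ j, p j ∈ S j)
    (hCCE : ∀ i : Fin N, ∀ a' ∈ S i,
      (∑ p, μ p * u i (Function.update p i a')) - ε ≤ ∑ p, μ p * u i p) :
    ∀ i : Fin N, ∀ a' : A i,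
      (∑ p, μ p * u i (Function.update p i a')) - ε ≤ ∑ p, μ p * u i p := by
  intro i a'
  by_cases h : a' ∈ S i
  · exact hCCE i a' h
  obtain ⟨x, hx0, hx1, hxS, hdomle⟩ := hdom i a' h
  have key : (∑ p, μ p * u i (Function.update p i a'))
      ≤ ∑ b, x b * ∑ p, μ p * u i (Function.update p i b) := by
    have hswap : (∑ b, x b * ∑ p, μ p * u i (Function.update p i b))
        = ∑ p, μ p * ∑ b, x b * u i (Function.update p i b) := by
      simp_rw [Finset.mul_sum]
      rw [Finset.sum_comm]
      congr 1; ext p; congr 1; ext b; ring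
    rw [hswap]
    apply Finset.sum_le_sum
    intro p _
    by_cases hp : μ p = 0
    · simp [hp]
    · exact mul_le_mul_of_nonneg_left
        (hdomle p (fun j _ => hsupp p hp j)) (hμ0 p)
  have key2 : (∑ b, x b * ∑ p, μ p * u i (Function.update p i b))
      ≤ ∑ b, x b * (ε + ∑ p, μ p * u i p) := by
    apply Finset.sum_le_sum
    intro b _
    by_cases hb : x b = 0
    · simp [hb]
    · apply mul_le_mul_of_nonneg_left _ (hx0 b)
      have := hCCE i b (hxS b hb)
      linarith
  have : (∑ b, x b * (ε + ∑ p, μ p * u i p)) = ε + ∑ p, μ p * u i p := by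
    rw [← Finset.sum_mul, hx1, one_mul]
  linarith
end

section
/- Swap regret decomposes into per-expert regrets: let θ^{(1)},...,θ^{(T)} ∈ Δ(A_i) be strategies and u^{(1)},...,u^{(T)} ∈ [0,1]^{A_i} payoff vectors, and suppose for each t the fixed-point condition θ^{(t)}(a) = Σ_b θ̂^{(t)}(a|b) θ^{(t)}(b) holds for row-stochastic matrices θ̂^{(t)}. Then SwapRegret_T := sup_{φ:A_i→A_i} Σ_t Σ_b θ^{(t)}(b) u^{(t)}(φ(b)) − Σ_t ⟨θ^{(t)}, u^{(t)}⟩ satisfies SwapRegret_T ≤ Σ_{b∈A_i} Regret_T^b, where Regret_T^b := max_{a∈A_i} Σ_t θ^{(t)}(b) u^{(t)}(a) − Σ_t ⟨θ̂^{(t)}(·|b), θ^{(t)}(b) u^{(t)}⟩. -/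
/-- Blum–Mansour decomposition: under the fixed-point condition
`θ^{(t)}(a) = Σ_b θ̂^{(t)}(a|b) θ^{(t)}(b)`, the swap regret is bounded by the
sum over experts `b` of the external regret of expert `b`. -/
theorem swap_regret_decomposition {α : Type*} [Fintype α] [Nonempty α] (T : ℕ)
    (θ : Fin T → α → ℝ) (u : Fin T → α → ℝ) (θhat : Fin T → α → α → ℝ)
    (hθ : ∀ t, θ t ∈ mixed α)
    (hu : ∀ t a, 0 ≤ u t a ∧ u t a ≤ 1)
    (hrow : ∀ t b, θhat t b ∈ mixed α)
    (hfix : ∀ t a, θ t a = ∑ b, θhat t b a * θ t b) :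
    (⨆ φ : α → α,
        ((∑ t, ∑ b, θ t b * u t (φ b)) - ∑ t, ∑ a, θ t a * u t a))
      ≤ ∑ b, ((⨆ a : α, ∑ t, θ t b * u t a)
          - ∑ t, ∑ a, θhat t b a * (θ t b * u t a)) := by
  classical
  apply ciSup_le
  intro φ
  have h2 : ∑ t, ∑ a, θ t a * u t a
      = ∑ b, ∑ t, ∑ a, θhat t b a * (θ t b * u t a) := by
    have key : ∀ t, ∑ a, θ t a * u t a = ∑ b, ∑ a, θhat t b a * (θ t b * u t a) := by
      intro t
      rw [Finset.sum_comm]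
      refine Finset.sum_congr rfl fun a _ => ?_
      rw [hfix t a, Finset.sum_mul]
      exact Finset.sum_congr rfl fun b _ => by ring
    rw [Finset.sum_congr rfl fun t _ => key t, Finset.sum_comm]
  have h1 : ∑ t, ∑ b, θ t b * u t (φ b)
      ≤ ∑ b, ⨆ a : α, ∑ t, θ t b * u t a := by
    rw [Finset.sum_comm]
    apply Finset.sum_le_sum
    intro b _
    exact le_ciSup (f := fun a => ∑ t, θ t b * u t a) (Set.Finite.bddAbove (Set.finite_range _)) (φ b)
  calc (∑ t, ∑ b, θ t b * u t (φ b)) - ∑ t, ∑ a, θ t a * u t a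
      ≤ (∑ b, ⨆ a : α, ∑ t, θ t b * u t a)
          - ∑ b, ∑ t, ∑ a, θhat t b a * (θ t b * u t a) := by
        rw [← h2]; exact sub_le_sub_right h1 _
    _ = _ := by rw [Finset.sum_sub_distrib]
end

section
/- Empirical best response against rationalizable profile is rationalizable: suppose a_{-i} is a profile of actions all surviving l−1 rounds of Δ-iterated dominance elimination, and suppose â ∈ A_i satisfies u_i(â, a_{-i}) ≥ u_i(x, a_{-i}) − Δ/2 for every mixed strategy x ∈ Δ(A_i) (e.g., â is an empirical best response with estimation error at most Δ/4 per action). Then â is not eliminated by round l of Δ-iterated dominance elimination, i.e., â ∉ E_l. -/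
/-- Empirical best response against a rationalizable profile is rationalizable:
if all opponents' actions in the profile `p` survive `l−1` rounds of
`Δ`-iterated dominance elimination (i.e. avoid `E_{l-1}`), and `â` is a
`Δ/2`-best response to `p_{-i}` among all mixed strategies, then `â ∉ E_l`. -/
theorem empirical_best_response_rationalizable
    {N : ℕ} {A : Fin N → Type*} [∀ i, Fintype (A i)]
    (u : ∀ i : Fin N, (∀ j, A j) → ℝ) (Δ : ℝ) (hΔ : 0 < Δ)
    (l : ℕ) (hl : 1 ≤ l) (i : Fin N) (p : ∀ j, A j)
    (hsurv : ∀ j, j ≠ i → (⟨j, p j⟩ : (k : Fin N) × A k) ∉ Elim u Δ (l - 1))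
    (ahat : A i)
    (hbr : ∀ x ∈ mixed (A i),
      (∑ b, x b * u i (Function.update p i b)) - Δ / 2
        ≤ u i (Function.update p i ahat)) :
    (⟨i, ahat⟩ : (k : Fin N) × A k) ∉ Elim u Δ l := by
  induction l with
  | zero => omega
  | succ l ih =>
    simp only [Nat.add_sub_cancel] at hsurv
    intro hmem
    rcases hmem with hmem | hdom
    · -- ahat ∈ Elim u Δ l, use ih (requires l ≥ 1)
      rcases Nat.eq_zero_or_pos l with rfl | hlpos
      · simp [Elim] at hmem
      · have hsurv' : ∀ j, j ≠ i → (⟨j, p j⟩ : (k : Fin N) × A k) ∉ Elim u Δ (l - 1) := by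
          intro j hj hE
          apply hsurv j hj
          have : l - 1 + 1 = l := by omega
          rw [← this]
          exact Set.mem_union_left _ hE
        exact ih hlpos hsurv' hmem
    · -- ahat dominated against Elim u Δ l
      obtain ⟨x, hx, hxd⟩ := hdom
      have h1 := hxd p hsurv
      have h2 := hbr x hx
      linarith
end

section
/- Correctness of the iterative best-response procedure (exact version): starting from any action profile (a_1^{(0)},...,a_N^{(0)}), define inductively a_i^{(l)} to be any action satisfying u_i(a_i^{(l)}, a_{-i}^{(l-1)}) ≥ u_i(x, a_{-i}^{(l-1)}) − Δ/2 for all mixed x ∈ Δ(A_i). Then for every l ≥ 0 and every i, a_i^{(l)} survives at least l rounds of Δ-iterated dominance elimination; in particular, after L iterations (the minimum elimination length), the profile (a_1^{(L)},...,a_N^{(L)}) consists only of Δ-rationalizable actions. -/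
/-- Correctness of the iterative best-response procedure: if for every `l` the
action `a_i^{(l+1)}` is a `Δ/2`-best response (among mixed strategies) to the
profile `a_{-i}^{(l)}`, then for every `l` and every player `i` the action
`a_i^{(l)}` survives at least `l` rounds of `Δ`-iterated dominance elimination;
in particular after `L` iterations (the minimum elimination length) the profile
consists only of `Δ`-rationalizable actions. -/
theorem iterative_best_response_correct
    {N : ℕ} {A : Fin N → Type*} [∀ i, Fintype (A i)]
    (u : ∀ i : Fin N, (∀ j, A j) → ℝ) (Δ : ℝ) (hΔ : 0 < Δ)
    (a : ℕ → ∀ j, A j)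
    (hbr : ∀ l : ℕ, ∀ i : Fin N, ∀ x ∈ mixed (A i),
      (∑ b, x b * u i (Function.update (a l) i b)) - Δ / 2
        ≤ u i (Function.update (a l) i (a (l + 1) i))) :
    (∀ l : ℕ, ∀ i : Fin N, (⟨i, a l i⟩ : (k : Fin N) × A k) ∉ Elim u Δ l) ∧
      (∀ i : Fin N,
        (⟨i, a (sInf {l : ℕ | Elim u Δ (l + 1) = Elim u Δ l}) i⟩ :
          (k : Fin N) × A k)
          ∉ Elim u Δ (sInf {l : ℕ | Elim u Δ (l + 1) = Elim u Δ l})) := by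
  have key : ∀ l : ℕ, ∀ m : ℕ, l ≤ m → ∀ i : Fin N,
      (⟨i, a m i⟩ : (k : Fin N) × A k) ∉ Elim u Δ l := by
    intro l
    induction l with
    | zero => intro m _ i h; exact h
    | succ l ih =>
      intro m hm i h
      obtain ⟨m', rfl⟩ : ∃ m', m = m' + 1 :=
        ⟨m - 1, by omega⟩
      have hm' : l ≤ m' := by omega
      rcases h with h | h
      · exact ih (m' + 1) (by omega) i h
      · obtain ⟨x, hx, hdom⟩ := h
        have hkey := hdom (a m') (fun j _ => ih m' hm' j)
        have hbr' := hbr m' i x hx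
        simp only at hkey
        linarith
  exact ⟨fun l i => key l l le_rfl i, fun i => key _ _ le_rfl i⟩
end
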